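/- Let k ≥ 2 and let {t_n} be the 2k-nacci sequence. Let B_0 be the 2k × 2k Hankel matrix with (i,j)-entry t_{i+j} for 0 ≤ i, j ≤ 2k-1. Then det(B_0) is odd; in particular B_0 is invertible over the rationals. -/

import Mathlib

open Matrix Finset

/-- Parity of the 2k-nacci sequence: `t n` is even iff `2k+1 ∣ n`. -/
theorem twoknacci_parity_aux (k : ℕ) (hk : 2 ≤ k) (t : ℕ → ℕ)
    (h0 : t 0 = 0)
    (h1 : ∀ n, 1 ≤ n → n ≤ 2 * k - 1 → t n = 1)
    (hrec : ∀ n, 2 * k ≤ n → t n = ∑ i ∈ Finset.Icc 1 (2 * k), t (n - i)) :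
    ∀ n, t n % 2 = if n % (2 * k + 1) = 0 then 0 else 1 := by
  intro n
  induction n using Nat.strong_induction_on with
  | _ n ih =>
    rcases lt_or_ge n (2 * k) with hn | hn
    · rcases Nat.eq_zero_or_pos n with rfl | hpos
      · simp [h0]
      · rw [h1 n hpos (by omega)]
        rw [Nat.mod_eq_of_lt (show n < 2 * k + 1 by omega), if_neg (show ¬ n = 0 by omega)]
    · rw [hrec n hn, Finset.sum_nat_mod]
      have hterm : ∀ i ∈ Finset.Icc 1 (2 * k),
          t (n - i) % 2 = if ¬ ((n - i) % (2 * k + 1) = 0) then 1 else 0 := by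
        intro i hi
        simp only [Finset.mem_Icc] at hi
        rw [ih (n - i) (by omega)]
        by_cases h : (n - i) % (2 * k + 1) = 0 <;> simp [h]
      rw [Finset.sum_congr rfl hterm, ← Finset.card_filter]
      set r := n % (2 * k + 1) with hr
      have hrlt : r < 2 * k + 1 := Nat.mod_lt _ (by omega)
      have hnr : (2 * k + 1) ∣ (n - r) := by
        have h := Nat.div_add_mod n (2 * k + 1)
        exact ⟨n / (2 * k + 1), by omega⟩
      have key : ∀ i, 1 ≤ i → i ≤ 2 * k → ((n - i) % (2 * k + 1) = 0 ↔ i = r) := by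
        intro i hi1 hi2
        constructor
        · intro h
          have hd : (2 * k + 1) ∣ (n - i) := Nat.dvd_of_mod_eq_zero h
          have d1 : (2 * k + 1) ∣ ((n - i) - (n - r)) := Nat.dvd_sub hd hnr
          have d2 : (2 * k + 1) ∣ ((n - r) - (n - i)) := Nat.dvd_sub hnr hd
          have e1 : (n - i) - (n - r) = r - i := by omega
          have e2 : (n - r) - (n - i) = i - r := by omega
          rw [e1] at d1; rw [e2] at d2
          have h1 : r - i = 0 := by
            by_contra h'
            have := Nat.le_of_dvd (by omega) d1; omega
          have h2 : i - r = 0 := by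
            by_contra h'
            have := Nat.le_of_dvd (by omega) d2; omega
          omega
        · rintro rfl
          obtain ⟨c, hc⟩ := hnr
          rw [hc, Nat.mul_mod_right]
      have hfilter : (Finset.Icc 1 (2 * k)).filter (fun i => ¬ ((n - i) % (2 * k + 1) = 0))
          = (Finset.Icc 1 (2 * k)).filter (fun i => ¬ (i = r)) := by
        apply Finset.filter_congr
        intro i hi
        simp only [Finset.mem_Icc] at hi
        simp [key i hi.1 hi.2]
      rw [hfilter]
      by_cases hr0 : r = 0
      · have : (Finset.Icc 1 (2 * k)).filter (fun i => ¬ (i = r)) = Finset.Icc 1 (2 * k) := by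
          apply Finset.filter_true_of_mem
          intro i hi
          simp only [Finset.mem_Icc] at hi
          omega
        rw [this, Nat.card_Icc]
        simp only [if_pos hr0]
        omega
      · have hmem : r ∈ Finset.Icc 1 (2 * k) := by
          simp only [Finset.mem_Icc]; omega
        have : (Finset.Icc 1 (2 * k)).filter (fun i => ¬ (i = r))
            = (Finset.Icc 1 (2 * k)).erase r := by
          ext i
          simp [Finset.mem_erase, and_comm]
        rw [this, Finset.card_erase_of_mem hmem, Nat.card_Icc]
        simp only [if_neg hr0]
        omega

theorem twoknacci_hankel_det_odd (k : ℕ) (hk : 2 ≤ k) (t : ℕ → ℕ)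
    (h0 : t 0 = 0)
    (h1 : ∀ n, 1 ≤ n → n ≤ 2 * k - 1 → t n = 1)
    (hrec : ∀ n, 2 * k ≤ n → t n = ∑ i ∈ Finset.Icc 1 (2 * k), t (n - i))
    (B0 : Matrix (Fin (2 * k)) (Fin (2 * k)) ℤ)
    (hB0 : ∀ i j, B0 i j = t ((i : ℕ) + (j : ℕ))) :
    Odd B0.det ∧ IsUnit (B0.map ((↑) : ℤ → ℚ)).det := by
  classical
  have hpar := twoknacci_parity_aux k hk t h0 h1 hrec
  have hkpos : 0 < 2 * k := by omega
  -- the matrix over ZMod 2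
  set M : Matrix (Fin (2 * k)) (Fin (2 * k)) (ZMod 2) := B0.map (Int.cast) with hMdef
  have hM : ∀ i j : Fin (2 * k),
      M i j = if ((i : ℕ) + (j : ℕ)) % (2 * k + 1) = 0 then 0 else 1 := by
    intro i j
    have : M i j = ((t ((i : ℕ) + (j : ℕ)) : ℕ) : ZMod 2) := by
      simp [hMdef, Matrix.map_apply, hB0]
    rw [this, ← ZMod.natCast_mod, hpar]
    split_ifs <;> simp
  -- distinguished index 1
  set i1 : Fin (2 * k) := ⟨1, by omega⟩ with hi1
  -- the involution i ↦ 2k+1-i (fixing 0 and 1)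
  set f : Fin (2 * k) → Fin (2 * k) :=
    fun i => if h : (i : ℕ) ≤ 1 then i else ⟨2 * k + 1 - (i : ℕ), by
      have := i.isLt; omega⟩ with hfdef
  have hf : Function.Involutive f := by
    intro i
    have hi := i.isLt
    by_cases h : (i : ℕ) ≤ 1
    · simp only [hfdef]; rw [dif_pos h, dif_pos h]
    · simp only [hfdef]
      rw [dif_neg h]
      rw [dif_neg (by simp only [Fin.val_mk]; omega)]
      exact Fin.ext (by simp only [Fin.val_mk]; omega)
  set σ : Equiv.Perm (Fin (2 * k)) := hf.toPerm with hσdef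
  have hσ : ∀ i, σ i = f i := fun i => rfl
  set P : Matrix (Fin (2 * k)) (Fin (2 * k)) (ZMod 2) := σ.permMatrix (ZMod 2) with hPdef
  have hP : ∀ i j, P i j = if σ i = j then 1 else 0 := by
    intro i j
    simp [hPdef, Equiv.Perm.permMatrix, PEquiv.toMatrix_apply, Equiv.toPEquiv_apply,
      Option.mem_def, eq_comm]
  -- row operation matrix
  set u : Fin (2 * k) → ZMod 2 := fun i => if i = i1 then 0 else 1 with hu
  set v : Fin (2 * k) → ZMod 2 := fun j => if j = i1 then 1 else 0 with hv
  set E : Matrix (Fin (2 * k)) (Fin (2 * k)) (ZMod 2) :=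
    1 + Matrix.replicateCol (Fin 1) u * Matrix.replicateRow (Fin 1) v with hEdef
  have hdetE : E.det = 1 := by
    rw [hEdef]
    erw [Matrix.det_one_add_replicateCol_mul_replicateRow (ι := Fin 1)]
    have : v ⬝ᵥ u = 0 := by
      apply Finset.sum_eq_zero
      intro j _
      by_cases h : j = i1 <;> simp [hu, hv, h]
    rw [this, add_zero]
  have hrow1 : ∀ j : Fin (2 * k), M i1 j = 1 := by
    intro j
    rw [hM]
    have hj := j.isLt
    rw [if_neg]
    rw [Nat.mod_eq_of_lt (by simp [hi1]; omega)]
    simp [hi1]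
  have hEM : E * M = Matrix.updateRow P i1 (fun _ => 1) := by
    ext i j
    have hij : (E * M) i j = M i j + u i * M i1 j := by
      rw [hEdef, Matrix.add_mul, Matrix.one_mul, Matrix.add_apply, Matrix.mul_apply]
      congr 1
      rw [Finset.sum_eq_single i1]
      · have h' : (Matrix.replicateCol (Fin 1) u * Matrix.replicateRow (Fin 1) v) i i1 = u i := by
          simp [Matrix.mul_apply, hv]
        rw [h']
      · intro b _ hb
        have h' : (Matrix.replicateCol (Fin 1) u * Matrix.replicateRow (Fin 1) v) i b = 0 := by
          simp [Matrix.mul_apply, hv, hb]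
        rw [h', zero_mul]
      · simp
    rw [hij]
    by_cases h : i = i1
    · subst h
      simp [hu, Matrix.updateRow_self, hrow1]
    · rw [Matrix.updateRow_ne h, hP]
      have hiv := i.isLt
      have hjv := j.isLt
      have hzero : ((i : ℕ) + (j : ℕ)) % (2 * k + 1) = 0 ↔
          ((i : ℕ) + (j : ℕ) = 0 ∨ (i : ℕ) + (j : ℕ) = 2 * k + 1) := by
        constructor
        · intro hmod
          rcases Nat.dvd_of_mod_eq_zero hmod with ⟨c, hc⟩
          have hc2 : c < 2 := by nlinarith
          interval_cases c <;> omega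
        · rintro (h' | h') <;> rw [h'] <;> simp
      have hone : (1 : ZMod 2) ≠ 0 := by decide
      have hval1 : (i : ℕ) ≠ 1 := fun hv1 => h (Fin.ext (by simp [hi1, hv1]))
      have hfij : (σ i = j) ↔ ((i : ℕ) + (j : ℕ) = 0 ∨ (i : ℕ) + (j : ℕ) = 2 * k + 1) := by
        simp only [hσ, hfdef]
        by_cases hle : (i : ℕ) ≤ 1
        · rw [dif_pos hle]
          rw [Fin.ext_iff]
          constructor <;> intro h' <;> omega
        · rw [dif_neg hle]
          rw [Fin.ext_iff]
          simp only [Fin.val_mk]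
          constructor <;> intro h' <;> omega
      rw [hM]
      by_cases hc : ((i : ℕ) + (j : ℕ)) % (2 * k + 1) = 0
      · rw [if_pos hc, if_pos (hfij.mpr (hzero.mp hc))]
        simp only [hrow1, hu, if_neg h, mul_one]
        decide
      · rw [if_neg hc, if_neg (fun h' => hc (hzero.mpr (hfij.mp h')))]
        simp only [hrow1, hu, if_neg h, mul_one]
        decide
  -- det M = det P
  have hsum : (fun _ : Fin (2 * k) => (1 : ZMod 2)) = ∑ l, (fun _ : Fin (2 * k) => (1 : ZMod 2)) l • P l := by
    funext j
    rw [Finset.sum_apply]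
    simp only [one_smul]
    have : ∀ l, P l j = if l = σ.symm j then 1 else 0 := by
      intro l
      rw [hP]
      congr 1
      simp [Equiv.eq_symm_apply, eq_comm]
    simp only [this]
    rw [Finset.sum_ite_eq' Finset.univ (σ.symm j) (fun _ => (1 : ZMod 2))]
    simp
  have hdetM : M.det = P.det := by
    have h1' : (E * M).det = M.det := by rw [Matrix.det_mul, hdetE, one_mul]
    rw [← h1', hEM]
    rw [show (fun _ : Fin (2 * k) => (1 : ZMod 2)) = ∑ l, (fun _ : Fin (2 * k) => (1 : ZMod 2)) l • P l from hsum]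
    rw [Matrix.det_updateRow_sum]
    simp
  have hdetP : P.det = 1 := by
    rw [hPdef, Matrix.det_permutation]
    rcases Int.units_eq_one_or (Equiv.Perm.sign σ) with h | h <;> rw [h] <;> decide
  have hcast : ((B0.det : ℤ) : ZMod 2) = 1 := by
    have h' := RingHom.map_det (Int.castRingHom (ZMod 2)) B0
    simp only [RingHom.mapMatrix_apply, Int.coe_castRingHom] at h'
    rw [h', ← hMdef, hdetM, hdetP]
  have hodd : Odd B0.det := by
    rw [← Int.not_even_iff_odd]
    rintro ⟨c, hc⟩
    have hz : ((B0.det : ℤ) : ZMod 2) = 0 := by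
      rw [hc]
      push_cast
      rw [← two_mul, show (2 : ZMod 2) = 0 by decide, zero_mul]
    rw [hcast] at hz
    exact one_ne_zero hz
  refine ⟨hodd, ?_⟩
  have hne : B0.det ≠ 0 := by
    intro h
    rw [h] at hodd
    exact (Int.not_odd_iff_even.mpr Even.zero) hodd
  have hq : (B0.map ((↑) : ℤ → ℚ)).det = (B0.det : ℚ) := by
    have h' := RingHom.map_det (Int.castRingHom ℚ) B0
    simp only [RingHom.mapMatrix_apply, Int.coe_castRingHom] at h'
    rw [h']
  rw [hq]
  exact isUnit_iff_ne_zero.mpr (by exact_mod_cast hne)
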